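/- Let μ₁₂, μ₂₃, μ₃₁ ∈ (0,4) with all corresponding angles θᵢⱼ = arccos(√μᵢⱼ/2) acute and θ₁₂+θ₂₃+θ₃₁ = π, and assume μ₁₂ ≤ μ₃₁. Then the function f(x) = μ₃₁/(2−x) + μ₂₃/(2 − μ₁₂/x) − 2 has exactly one root in the open interval (μ₁₂/2, 2), which is a double root of the associated quadratic. -/
import Mathlib

open Real Set

set_option maxHeartbeats 1000000 in
theorem affine_prism_one_double_root
    (μ12 μ23 μ31 : ℝ)
    (h12 : μ12 ∈ Set.Ioo (0 : ℝ) 4)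
    (h23 : μ23 ∈ Set.Ioo (0 : ℝ) 4)
    (h31 : μ31 ∈ Set.Ioo (0 : ℝ) 4)
    (hsum : Real.arccos (Real.sqrt μ12 / 2) + Real.arccos (Real.sqrt μ23 / 2)
            + Real.arccos (Real.sqrt μ31 / 2) = π)
    (hle : μ12 ≤ μ31)
    (σ p : ℝ)
    (hσ : σ = -(μ23 + μ31 - μ12 - 4) / (4 - μ23))
    (hp : p = μ12 * (4 - μ31) / (4 - μ23)) :
    ∃ x : ℝ, x ∈ Set.Ioo (μ12 / 2) 2 ∧
      μ31 / (2 - x) + μ23 / (2 - μ12 / x) - 2 = 0 ∧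
      (∀ z ∈ Set.Ioo (μ12 / 2) 2,
        μ31 / (2 - z) + μ23 / (2 - μ12 / z) - 2 = 0 → z = x) ∧
      ∀ y : ℝ, y ^ 2 - 2 * σ * y + p = (y - x) ^ 2 := by
  obtain ⟨h12a, h12b⟩ := h12
  obtain ⟨h23a, h23b⟩ := h23
  obtain ⟨h31a, h31b⟩ := h31
  set a := Real.sqrt μ12 / 2 with ha
  set b := Real.sqrt μ23 / 2 with hb
  set c := Real.sqrt μ31 / 2 with hc
  have sa : Real.sqrt μ12 ^ 2 = μ12 := Real.sq_sqrt h12a.le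
  have sb : Real.sqrt μ23 ^ 2 = μ23 := Real.sq_sqrt h23a.le
  have sc : Real.sqrt μ31 ^ 2 = μ31 := Real.sq_sqrt h31a.le
  have sap : 0 < Real.sqrt μ12 := Real.sqrt_pos.2 h12a
  have sbp : 0 < Real.sqrt μ23 := Real.sqrt_pos.2 h23a
  have scp : 0 < Real.sqrt μ31 := Real.sqrt_pos.2 h31a
  have ha1 : a ≤ 1 := by rw [ha]; nlinarith
  have hb1 : b ≤ 1 := by rw [hb]; nlinarith
  have hc1 : c ≤ 1 := by rw [hc]; nlinarith
  have ha0 : -1 ≤ a := by rw [ha]; linarith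
  have hb0 : -1 ≤ b := by rw [hb]; linarith
  have hc0 : -1 ≤ c := by rw [hc]; linarith
  -- cos C = sin A sin B - cos A cos B
  have hC : Real.arccos c = π - (Real.arccos a + Real.arccos b) := by linarith
  have hcos : c = Real.sqrt (1 - a ^ 2) * Real.sqrt (1 - b ^ 2) - a * b := by
    have := congrArg Real.cos hC
    rw [Real.cos_arccos hc0 hc1, Real.cos_pi_sub, Real.cos_add,
      Real.sin_arccos, Real.sin_arccos, Real.cos_arccos ha0 ha1,
      Real.cos_arccos hb0 hb1] at this
    linarith
  -- key identity a²+b²+c²+2abc = 1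
  have hkey' : a ^ 2 + b ^ 2 + c ^ 2 + 2 * (a * b * c) = 1 := by
    have h1 : c + a * b = Real.sqrt (1 - a ^ 2) * Real.sqrt (1 - b ^ 2) := by
      linarith
    have h2 : (c + a * b) ^ 2 = (1 - a ^ 2) * (1 - b ^ 2) := by
      rw [h1, mul_pow, Real.sq_sqrt (by nlinarith), Real.sq_sqrt (by nlinarith)]
    linear_combination h2
  set s := Real.sqrt μ12 * Real.sqrt μ23 * Real.sqrt μ31 with hsdef
  have hs0 : 0 < s := by positivity
  have hs2 : s ^ 2 = μ12 * μ23 * μ31 := by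
    rw [hsdef, mul_pow, mul_pow, sa, sb, sc]
  have hkey : μ12 + μ23 + μ31 + s = 4 := by
    have ha2 : a ^ 2 = μ12 / 4 := by rw [ha, div_pow, sa]; norm_num
    have hb2 : b ^ 2 = μ23 / 4 := by rw [hb, div_pow, sb]; norm_num
    have hc2 : c ^ 2 = μ31 / 4 := by rw [hc, div_pow, sc]; norm_num
    have habc : a * b * c = s / 8 := by rw [ha, hb, hc, hsdef]; ring
    rw [ha2, hb2, hc2, habc] at hkey'
    linarith
  have h23d : (0:ℝ) < 4 - μ23 := by linarith
  have hσrel : (4 - μ23) * σ = 2 * μ12 + s := by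
    rw [hσ]; field_simp; linarith
  have hprel : (4 - μ23) * p = μ12 * (4 - μ31) := by
    rw [hp]; field_simp
  have hσp : σ ^ 2 = p := by
    have h4 : ((4 - μ23) ^ 2 : ℝ) ≠ 0 := by positivity
    apply mul_left_cancel₀ h4
    have : ((4 - μ23) * σ) ^ 2 = (2 * μ12 + s) ^ 2 := by rw [hσrel]
    linear_combination this + hs2 + 4 * μ12 * hkey - (4 - μ23) * hprel
  have hσlo : μ12 / 2 < σ := by
    have e1 : (4 - μ23) * (σ - μ12 / 2) = s + μ12 * μ23 / 2 := by
      linear_combination hσrel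
    have h1 : 0 < (4 - μ23) * (σ - μ12 / 2) := by
      rw [e1]; positivity
    rcases mul_pos_iff.mp h1 with ⟨_, h⟩ | ⟨h, _⟩
    · linarith
    · linarith
  have hσhi : σ < 2 := by
    have e1 : (4 - μ23) * (2 - σ) = (4 - μ23) + (μ31 - μ12) := by
      linear_combination -hσrel - hkey
    have h1 : 0 < (4 - μ23) * (2 - σ) := by rw [e1]; linarith
    rcases mul_pos_iff.mp h1 with ⟨_, h⟩ | ⟨h, _⟩
    · linarith
    · linarith
  have hσpos : 0 < σ := lt_trans (by linarith) hσlo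
  have hP : ∀ z : ℝ, μ31 * (2 * z - μ12) + μ23 * z * (2 - z)
      - 2 * (2 - z) * (2 * z - μ12) = (4 - μ23) * (z - σ) ^ 2 := by
    intro z
    linear_combination 2 * z * hσrel + 2 * z * hkey - (4 - μ23) * hσp - hprel
  have hden : ∀ z : ℝ, z ∈ Set.Ioo (μ12 / 2) 2 →
      0 < z ∧ (2 : ℝ) - z ≠ 0 ∧ 2 - μ12 / z ≠ 0 := by
    intro z ⟨hz1, hz2⟩
    have hz0 : 0 < z := lt_trans (by linarith) hz1
    refine ⟨hz0, by linarith [hz2], ?_⟩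
    have : μ12 / z < 2 := by rw [div_lt_iff₀ hz0]; linarith
    linarith
  have hequiv : ∀ z : ℝ, z ∈ Set.Ioo (μ12 / 2) 2 →
      (μ31 / (2 - z) + μ23 / (2 - μ12 / z) - 2 = 0 ↔ (z - σ) ^ 2 = 0) := by
    intro z hz
    obtain ⟨hz0, hd1, hd2⟩ := hden z hz
    have hz0' : z ≠ 0 := ne_of_gt hz0
    have hd2' : 2 * z - μ12 ≠ 0 := by
      have := hz.1; intro hc; linarith
    have h4 : (4 - μ23 : ℝ) ≠ 0 := ne_of_gt h23d
    constructor
    · intro h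
      have h' : (4 - μ23) * (z - σ) ^ 2 = 0 := by
        rw [← hP z]
        field_simp at h
        linear_combination h
      exact (mul_eq_zero.mp h').resolve_left h4
    · intro h
      have h' : μ31 * (2 * z - μ12) + μ23 * z * (2 - z)
          - 2 * (2 - z) * (2 * z - μ12) = 0 := by
        rw [hP z, h]; ring
      field_simp
      linear_combination h'
  refine ⟨σ, ⟨hσlo, hσhi⟩, ?_, ?_, ?_⟩
  · exact (hequiv σ ⟨hσlo, hσhi⟩).2 (by ring)
  · intro z hz hfz
    have := (hequiv z hz).1 hfz
    have := pow_eq_zero_iff (n := 2) (by norm_num) |>.1 this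
    linarith [sub_eq_zero.1 this]
  · intro y
    linear_combination - hσp
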